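/- Statement (B): 'If {X_n} ∼_λ k is Hermitian and {D_n} are real diagonal with ‖D_n‖₁ = o(n) then {X_n + i·D_n} ∼_λ k' implies Statement (C): 'If {D_n} ∼_GLT k is a sequence of real diagonal matrices and {Y_n} are skew-Hermitian with ‖Y_n‖₁ = o(n), then {D_n + Y_n} ∼_λ k'. -/

import Mathlib

open Filter MeasureTheory
open scoped Matrix
open Asymptotics
open scoped BigOperators

/-- The eigenvalues of a complex matrix, listed with multiplicity (in some fixed order). -/
noncomputable def eigs {n : ℕ} (A : Matrix (Fin n) (Fin n) ℂ) : Fin n → ℂ :=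
  fun i => (Matrix.charpoly A).roots.toList.getD i 0

/-- Optimal matching distance between two `n`-tuples of complex numbers. -/
noncomputable def matchDist {n : ℕ} (v w : Fin n → ℂ) : ℝ :=
  ⨅ σ : Equiv.Perm (Fin n), ⨆ i, ‖v i - w (σ i)‖

/-- Spectral norm (largest singular value) of a matrix. -/
noncomputable def specNorm {n : ℕ} (A : Matrix (Fin n) (Fin n) ℂ) : ℝ :=
  ‖Matrix.toEuclideanCLM (𝕜 := ℂ) A‖

/-- Singular values of a matrix: square roots of eigenvalues of `Aᴴ * A`. -/
noncomputable def singVals {n : ℕ} (A : Matrix (Fin n) (Fin n) ℂ) : Fin n → ℝ :=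
  fun i => Real.sqrt ((Matrix.isHermitian_conjTranspose_mul_self A).eigenvalues i)

/-- Trace (Schatten-1) norm. -/
noncomputable def traceNorm {n : ℕ} (A : Matrix (Fin n) (Fin n) ℂ) : ℝ :=
  ∑ i, singVals A i

/-- Schatten `p`-norm. -/
noncomputable def schattenNorm (p : ℝ) {n : ℕ} (A : Matrix (Fin n) (Fin n) ℂ) : ℝ :=
  (∑ i, singVals A i ^ p) ^ (1 / p)

/-- Rearrangement of a real tuple in non-increasing order. -/
noncomputable def descSort {n : ℕ} (v : Fin n → ℝ) : Fin n → ℝ :=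
  fun i => (v ∘ Tuple.sort v) i.rev

/-- The function `p(A) = min_{i=1..n+1} ((i-1)/n + σ_i(A))`, `σ_{n+1} = 0`. -/
noncomputable def pfun {n : ℕ} (A : Matrix (Fin n) (Fin n) ℂ) : ℝ :=
  ⨅ i : Fin (n + 1),
    ((i : ℝ) / n + if h : (i : ℕ) < n then descSort (singVals A) ⟨i, h⟩ else 0)

/-- Generalized optimal matching distance between two `n`-tuples. -/
noncomputable def gMatchDist {n : ℕ} (v w : Fin n → ℂ) : ℝ :=
  ⨅ σ : Equiv.Perm (Fin n), ⨅ i : Fin n,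
    ((i : ℝ) / n + descSort (fun j => ‖v j - w (σ j)‖) i)

/-- A matrix-sequence. -/
abbrev MatSeq := (n : ℕ) → Matrix (Fin n) (Fin n) ℂ

/-- `f : D → ℂ` is a spectral symbol (in the Weyl sense) of the matrix-sequence `A`. -/
def SymbolOf {q : ℕ} (A : MatSeq) (D : Set (Fin q → ℝ)) (f : (Fin q → ℝ) → ℂ) : Prop :=
  MeasurableSet D ∧ volume D ≠ 0 ∧ volume D ≠ ⊤ ∧
  ∀ F : ℂ → ℂ, Continuous F → HasCompactSupport F →
    Tendsto (fun n : ℕ => (n : ℂ)⁻¹ * ∑ i, F (eigs (A n) i)) atTop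
      (nhds (((volume D).toReal)⁻¹ • ∫ x in D, F (f x)))

/-- Asymptotic optimal matching pseudodistance between matrix-sequences. -/
noncomputable def dSeq (A B : MatSeq) : ℝ :=
  Filter.atTop.limsup fun n => matchDist (eigs (A n)) (eigs (B n))

/-- Asymptotic generalized optimal matching pseudodistance. -/
noncomputable def dSeq' (A B : MatSeq) : ℝ :=
  Filter.atTop.limsup fun n => gMatchDist (eigs (A n)) (eigs (B n))

/-- Hermitian (real) part of a matrix. -/
noncomputable def reM {n : ℕ} (M : Matrix (Fin n) (Fin n) ℂ) : Matrix (Fin n) (Fin n) ℂ :=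
  (2 : ℂ)⁻¹ • (M + Mᴴ)

/-- Skew part of a matrix, `(M - Mᴴ)/(2i)`. -/
noncomputable def imM {n : ℕ} (M : Matrix (Fin n) (Fin n) ℂ) : Matrix (Fin n) (Fin n) ℂ :=
  (2 * Complex.I)⁻¹ • (M - Mᴴ)

/-- The acs pseudodistance. -/
noncomputable def dacs (A B : MatSeq) : ℝ := Filter.atTop.limsup fun n => pfun (A n - B n)

/-- `p_N(A) = limsup ‖A_n‖₁ / n`. -/
noncomputable def pN (A : MatSeq) : ℝ := Filter.atTop.limsup fun n => traceNorm (A n) / n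

/-- The pseudodistance `d_H`. -/
noncomputable def dH (A B : MatSeq) : ℝ :=
  dacs (fun n => reM (A n)) (fun n => reM (B n)) +
    pN (fun n => imM (A n)) + pN (fun n => imM (B n))

open Polynomial in
lemma charpoly_conj_units {n : ℕ} (U V A : Matrix (Fin n) (Fin n) ℂ)
    (hUV : U * V = 1) (hVU : V * U = 1) :
    (U * A * V).charpoly = A.charpoly := by
  classical
  have hmap1 : (C : ℂ →+* ℂ[X]).mapMatrix (U * A * V)
      = (C : ℂ →+* ℂ[X]).mapMatrix U * (C : ℂ →+* ℂ[X]).mapMatrix A *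
        (C : ℂ →+* ℂ[X]).mapMatrix V := by
    simp [map_mul]
  have hUV' : (C : ℂ →+* ℂ[X]).mapMatrix U * (C : ℂ →+* ℂ[X]).mapMatrix V = 1 := by
    rw [← map_mul, hUV, map_one]
  have hscal : (C : ℂ →+* ℂ[X]).mapMatrix U * Matrix.scalar (Fin n) (X : ℂ[X]) *
      (C : ℂ →+* ℂ[X]).mapMatrix V = Matrix.scalar (Fin n) (X : ℂ[X]) := by
    rw [(Matrix.scalar_commute (X : ℂ[X]) (fun r => Commute.all _ _) _).symm.eq,
      Matrix.mul_assoc, hUV', Matrix.mul_one]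
  have key : Matrix.charmatrix (U * A * V)
      = (C : ℂ →+* ℂ[X]).mapMatrix U * Matrix.charmatrix A *
        (C : ℂ →+* ℂ[X]).mapMatrix V := by
    rw [Matrix.charmatrix, Matrix.charmatrix, hmap1, Matrix.mul_sub, Matrix.sub_mul, hscal]
  have hdet : ((C : ℂ →+* ℂ[X]).mapMatrix U).det * ((C : ℂ →+* ℂ[X]).mapMatrix V).det = 1 := by
    rw [← Matrix.det_mul, hUV', Matrix.det_one]
  rw [Matrix.charpoly, Matrix.charpoly, key, Matrix.det_mul, Matrix.det_mul, mul_right_comm,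
    hdet, one_mul]

open Polynomial in
lemma charpoly_diagonal' {n : ℕ} (d : Fin n → ℂ) :
    (Matrix.diagonal d).charpoly = ∏ i, (X - C (d i)) := by
  classical
  have h : Matrix.charmatrix (Matrix.diagonal d)
      = Matrix.diagonal (fun i => (X : ℂ[X]) - C (d i)) := by
    ext i j
    by_cases hij : i = j
    · subst hij
      simp [Matrix.charmatrix_apply_eq]
    · simp [Matrix.charmatrix_apply_ne _ _ _ hij, Matrix.diagonal_apply_ne _ hij]
  rw [Matrix.charpoly, h, Matrix.det_diagonal]

open Polynomial in
lemma roots_charpoly_diagonal' {n : ℕ} (d : Fin n → ℂ) :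
    (Matrix.diagonal d).charpoly.roots = Finset.univ.val.map d := by
  rw [charpoly_diagonal']
  have h : (∏ i, ((X : ℂ[X]) - C (d i)))
      = ((Finset.univ.val.map d).map (fun a => (X : ℂ[X]) - C a)).prod := by
    rw [Multiset.map_map]
    rfl
  rw [h, Polynomial.roots_multiset_prod_X_sub_C]

lemma roots_charpoly_isHermitian {n : ℕ} {M : Matrix (Fin n) (Fin n) ℂ}
    (hM : M.IsHermitian) :
    M.charpoly.roots = Finset.univ.val.map (fun i => ((hM.eigenvalues i : ℂ))) := by
  have h1 : M.charpoly
      = (Matrix.diagonal (fun i => ((hM.eigenvalues i : ℂ)))).charpoly := by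
    conv_lhs => rw [hM.spectral_theorem]
    exact charpoly_conj_units _ _ _
      (Matrix.mem_unitaryGroup_iff.mp hM.eigenvectorUnitary.2)
      (Matrix.mem_unitaryGroup_iff'.mp hM.eigenvectorUnitary.2)
  rw [h1, roots_charpoly_diagonal']

lemma eigenvalues_multiset_eq {n : ℕ} {M N : Matrix (Fin n) (Fin n) ℂ}
    (hM : M.IsHermitian) (hN : N.IsHermitian) (h : M.charpoly = N.charpoly) :
    Finset.univ.val.map hM.eigenvalues = Finset.univ.val.map hN.eigenvalues := by
  have h2 := (roots_charpoly_isHermitian hM).symm.trans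
    (h ▸ roots_charpoly_isHermitian hN)
  apply Multiset.map_injective (f := fun r : ℝ => (r : ℂ)) Complex.ofReal_injective
  simpa [Multiset.map_map, Function.comp_def] using h2

lemma traceNorm_eq_of_charpoly {n : ℕ} (A B : Matrix (Fin n) (Fin n) ℂ)
    (h : (Aᴴ * A).charpoly = (Bᴴ * B).charpoly) : traceNorm A = traceNorm B := by
  have hm := eigenvalues_multiset_eq (Matrix.isHermitian_conjTranspose_mul_self A)
    (Matrix.isHermitian_conjTranspose_mul_self B) h
  have e : ∀ (M : Matrix (Fin n) (Fin n) ℂ),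
      traceNorm M = ((Finset.univ.val.map
        (Matrix.isHermitian_conjTranspose_mul_self M).eigenvalues).map Real.sqrt).sum := by
    intro M
    rw [Multiset.map_map]
    rfl
  rw [e A, e B, hm]

lemma symbolOf_congr {q : ℕ} {A B : MatSeq} {D : Set (Fin q → ℝ)} {k : (Fin q → ℝ) → ℂ}
    (h : ∀ n, (A n).charpoly = (B n).charpoly) (hA : SymbolOf A D k) : SymbolOf B D k := by
  have he : ∀ n, eigs (B n) = eigs (A n) := by
    intro n
    unfold eigs
    rw [h n]
  obtain ⟨h1, h2, h3, h4⟩ := hA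
  refine ⟨h1, h2, h3, fun F hF hFc => ?_⟩
  simpa only [he] using h4 F hF hFc

set_option maxHeartbeats 1000000

/-- for any notion of GLT sequence such that Hermitian GLT sequences have
their GLT symbol as spectral symbol, Statement (B) — Hermitian `{X_n} ∼_λ k` plus real
diagonal `{D_n}` with `‖D_n‖₁ = o(n)` gives `{X_n + i·D_n} ∼_λ k` — implies Statement (C):
if `{D_n} ∼_GLT k` is a sequence of real diagonal matrices and `{Y_n}` are skew-Hermitian
with `‖Y_n‖₁ = o(n)`, then `{D_n + Y_n} ∼_λ k`. -/
theorem stmt_17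
    (GLT : ∀ {q : ℕ}, MatSeq → Set (Fin q → ℝ) → ((Fin q → ℝ) → ℂ) → Prop)
    (hGLTspec : ∀ {q : ℕ} (A : MatSeq) (D : Set (Fin q → ℝ)) (k : (Fin q → ℝ) → ℂ),
      (∀ n, (A n).IsHermitian) → GLT A D k → SymbolOf A D k)
    (hB : ∀ (q : ℕ) (D : Set (Fin q → ℝ)) (k : (Fin q → ℝ) → ℂ) (X : MatSeq)
      (Dn : (n : ℕ) → Fin n → ℝ),
      (∀ n, (X n).IsHermitian) → SymbolOf X D k →
      (fun n => traceNorm (Matrix.diagonal fun i => ((Dn n i : ℂ)))) =o[atTop]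
        (fun n : ℕ => (n : ℝ)) →
      SymbolOf (fun n => X n + Complex.I • Matrix.diagonal fun i => ((Dn n i : ℂ))) D k) :
    ∀ (q : ℕ) (D : Set (Fin q → ℝ)) (k : (Fin q → ℝ) → ℂ)
      (Dn : (n : ℕ) → Fin n → ℝ) (Y : MatSeq),
      GLT (fun n => Matrix.diagonal fun i => ((Dn n i : ℂ))) D k →
      (∀ n, (Y n)ᴴ = -(Y n)) →
      (fun n => traceNorm (Y n)) =o[atTop] (fun n : ℕ => (n : ℝ)) →
      SymbolOf (fun n => (Matrix.diagonal fun i => ((Dn n i : ℂ))) + Y n) D k := by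
  intro q D k Dn Y hGLT hY hO
  classical
  set H : MatSeq := fun n => (-Complex.I) • Y n with hHdef
  have hH : ∀ n, (H n).IsHermitian := by
    intro n
    show ((-Complex.I) • Y n)ᴴ = (-Complex.I) • Y n
    rw [Matrix.conjTranspose_smul, hY n]
    simp [smul_neg, neg_smul]
  have hspec : ∀ n, H n = (hH n).eigenvectorUnitary
      * Matrix.diagonal (fun i => (((hH n).eigenvalues i : ℂ)))
      * star ((hH n).eigenvectorUnitary : Matrix (Fin n) (Fin n) ℂ) := by
    intro n
    exact (hH n).spectral_theorem
  have hU1 : ∀ n, ((hH n).eigenvectorUnitary : Matrix (Fin n) (Fin n) ℂ)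
      * star ((hH n).eigenvectorUnitary : Matrix (Fin n) (Fin n) ℂ) = 1 :=
    fun n => Matrix.mem_unitaryGroup_iff.mp (hH n).eigenvectorUnitary.2
  have hU2 : ∀ n, star ((hH n).eigenvectorUnitary : Matrix (Fin n) (Fin n) ℂ)
      * ((hH n).eigenvectorUnitary : Matrix (Fin n) (Fin n) ℂ) = 1 :=
    fun n => Matrix.mem_unitaryGroup_iff'.mp (hH n).eigenvectorUnitary.2
  have hYeq : ∀ n, Y n = ((hH n).eigenvectorUnitary : Matrix (Fin n) (Fin n) ℂ)
      * (Complex.I • Matrix.diagonal (fun i => (((hH n).eigenvalues i : ℂ))))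
      * star ((hH n).eigenvectorUnitary : Matrix (Fin n) (Fin n) ℂ) := by
    intro n
    have h0 : Y n = Complex.I • H n := by
      rw [hHdef]
      simp [smul_smul]
    rw [h0]
    conv_lhs => rw [hspec n]
    simp [Matrix.mul_smul, Matrix.smul_mul]
  set Dg : MatSeq := fun n => Matrix.diagonal fun i => ((Dn n i : ℂ)) with hDgdef
  set X : MatSeq := fun n => star ((hH n).eigenvectorUnitary : Matrix (Fin n) (Fin n) ℂ)
      * Dg n * ((hH n).eigenvectorUnitary : Matrix (Fin n) (Fin n) ℂ) with hXdef
  have hdiagH : ∀ (m : ℕ) (v : Fin m → ℝ),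
      (Matrix.diagonal (fun i => ((v i : ℂ)))).IsHermitian := by
    intro m v
    show _ᴴ = _
    have hstar : (star fun i : Fin m => ((v i : ℂ))) = fun i : Fin m => ((v i : ℂ)) := by
      funext i
      simp [Complex.conj_ofReal]
    rw [Matrix.diagonal_conjTranspose, hstar]
  have hXH : ∀ n, (X n).IsHermitian := by
    intro n
    rw [hXdef]
    exact Matrix.isHermitian_conjTranspose_mul_mul _ (hdiagH n (Dn n))
  have hSymDg : SymbolOf Dg D k := hGLTspec _ D k (fun n => hdiagH n (Dn n)) hGLT
  have hSymX : SymbolOf X D k := by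
    refine symbolOf_congr (fun n => ?_) hSymDg
    exact (charpoly_conj_units _ _ _ (hU2 n) (hU1 n)).symm
  have hcancel : ∀ n (M : Matrix (Fin n) (Fin n) ℂ),
      star ((hH n).eigenvectorUnitary : Matrix (Fin n) (Fin n) ℂ)
        * (((hH n).eigenvectorUnitary : Matrix (Fin n) (Fin n) ℂ) * M) = M := by
    intro n M
    rw [← Matrix.mul_assoc, hU2 n, Matrix.one_mul]
  have hcancel' : ∀ n (M : Matrix (Fin n) (Fin n) ℂ),
      ((hH n).eigenvectorUnitary : Matrix (Fin n) (Fin n) ℂ)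
        * (star ((hH n).eigenvectorUnitary : Matrix (Fin n) (Fin n) ℂ) * M) = M := by
    intro n M
    rw [← Matrix.mul_assoc, hU1 n, Matrix.one_mul]
  have hTN : ∀ n, traceNorm (Matrix.diagonal fun i => (((hH n).eigenvalues i : ℂ)))
      = traceNorm (Y n) := by
    intro n
    apply traceNorm_eq_of_charpoly
    have hd := hdiagH n (hH n).eigenvalues
    have hYHY : (Y n)ᴴ * Y n
        = ((hH n).eigenvectorUnitary : Matrix (Fin n) (Fin n) ℂ)
          * (Matrix.diagonal (fun i => (((hH n).eigenvalues i : ℂ)))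
            * Matrix.diagonal (fun i => (((hH n).eigenvalues i : ℂ))))
          * star ((hH n).eigenvectorUnitary : Matrix (Fin n) (Fin n) ℂ) := by
      rw [hY n]
      conv_lhs => rw [hYeq n]
      simp only [Matrix.neg_mul, Matrix.mul_smul, Matrix.smul_mul, smul_smul,
        Matrix.mul_assoc]
      simp only [hcancel n]
      simp [Complex.I_mul_I, Matrix.mul_smul, Matrix.smul_mul, smul_smul,
        Matrix.mul_assoc]
    rw [Matrix.IsHermitian.eq hd, hYHY]
    exact (charpoly_conj_units _ _ _ (hU1 n) (hU2 n)).symm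
  have hO' : (fun n => traceNorm (Matrix.diagonal
      fun i => (((hH n).eigenvalues i : ℂ)))) =o[atTop] (fun n : ℕ => (n : ℝ)) := by
    have heq : (fun n => traceNorm (Matrix.diagonal
        fun i => (((hH n).eigenvalues i : ℂ)))) = fun n => traceNorm (Y n) :=
      funext hTN
    rw [heq]
    exact hO
  have hBout := hB q D k X (fun n => (hH n).eigenvalues) hXH hSymX hO'
  refine symbolOf_congr (fun n => ?_) hBout
  have hconj : ((hH n).eigenvectorUnitary : Matrix (Fin n) (Fin n) ℂ)
      * (X n + Complex.I • Matrix.diagonal (fun i => (((hH n).eigenvalues i : ℂ))))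
      * star ((hH n).eigenvectorUnitary : Matrix (Fin n) (Fin n) ℂ)
      = Dg n + Y n := by
    rw [Matrix.mul_add, Matrix.add_mul]
    congr 1
    · rw [hXdef]
      simp only [Matrix.mul_assoc]
      rw [hcancel' n, hU1 n, Matrix.mul_one]
    · exact (hYeq n).symm
  rw [← hconj]
  exact (charpoly_conj_units _ _ _ (hU1 n) (hU2 n)).symm
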